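/- Fix ν > 0 and let g_c = √(2ν/π). For the function E(c) = ν log(2/√(2πν)) − ν( f(t) + (1/4) f'(t)² ) + g( √(ν/2) f'(t) + √(2ν) t ) with t = c/√(2ν) and f(t) = log(1 + erf(t)): if g = g_c, then c = 0 is the unique critical point of E, i.e., f'(0) = √(2/ν) g_c. -/

import Mathlib

open Real MeasureTheory

/-- The error function `erf x = (2/√π) ∫₀ˣ exp(−t²) dt`. -/
noncomputable def erf (x : ℝ) : ℝ := (2 / Real.sqrt Real.pi) * ∫ t in (0:ℝ)..x, Real.exp (-t^2)

/-- `f(t) = log(1 + erf t)`. -/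
noncomputable def fErf (t : ℝ) : ℝ := Real.log (1 + erf t)

/-- `f'(t) = (2/√π) exp(−t²)/(1 + erf t)`. -/
noncomputable def fErf' (t : ℝ) : ℝ := (2 / Real.sqrt Real.pi) * Real.exp (-t^2) / (1 + erf t)

/-- The reduced energy `E(c)` on the family of truncated Gaussians, with `t = c/√(2ν)`. -/
noncomputable def Eenergy (ν g c : ℝ) : ℝ :=
  ν * Real.log (2 / Real.sqrt (2 * Real.pi * ν))
    - ν * (fErf (c / Real.sqrt (2 * ν)) + (1/4) * (fErf' (c / Real.sqrt (2 * ν))) ^ 2)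
    + g * (Real.sqrt (ν / 2) * fErf' (c / Real.sqrt (2 * ν))
        + Real.sqrt (2 * ν) * (c / Real.sqrt (2 * ν)))


open Set Filter


noncomputable def Ig (x : ℝ) : ℝ := ∫ s in Ioi x, Real.exp (-s^2)

lemma gauss_integrable : Integrable (fun s : ℝ => Real.exp (-s^2)) := by
  have := integrable_exp_neg_mul_sq (b := 1) one_pos
  simpa using this

lemma gauss_ii (a b : ℝ) : IntervalIntegrable (fun s : ℝ => Real.exp (-s^2)) volume a b :=
  gauss_integrable.intervalIntegrable

lemma Ig_pos (x : ℝ) : 0 < Ig x := by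
  rw [Ig, setIntegral_pos_iff_support_of_nonneg_ae]
  · have : (Function.support fun s : ℝ => Real.exp (-s^2)) = univ := by
      ext s; simp [Function.support, Real.exp_ne_zero]
    rw [this]
    simpa using measure_Ioi_pos (volume) x |>.trans_le (le_of_eq rfl) |> fun h => h
  · exact Eventually.of_forall fun s => (Real.exp_pos _).le
  · exact gauss_integrable.integrableOn

lemma Ig_zero : Ig 0 = Real.sqrt Real.pi / 2 := by
  have := integral_gaussian_Ioi 1
  simp only [neg_mul, one_mul, div_one] at this
  simpa [Ig] using this

lemma Ig_eq (x : ℝ) : Ig x = Ig 0 - ∫ t in (0:ℝ)..x, Real.exp (-t^2) := by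
  have h := intervalIntegral.integral_Iic_add_Ioi (b := x) (μ := volume)
      (f := fun s : ℝ => Real.exp (-s^2)) gauss_integrable.integrableOn gauss_integrable.integrableOn
  have h0 := intervalIntegral.integral_Iic_add_Ioi (b := (0:ℝ)) (μ := volume)
      (f := fun s : ℝ => Real.exp (-s^2)) gauss_integrable.integrableOn gauss_integrable.integrableOn
  have hs := intervalIntegral.integral_Iic_sub_Iic (μ := volume)
      (f := fun s : ℝ => Real.exp (-s^2)) (a := (0:ℝ)) (b := x)
      gauss_integrable.integrableOn gauss_integrable.integrableOn
  simp only [Ig]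
  linarith [hs]

lemma hasDerivAt_Ig (x : ℝ) : HasDerivAt Ig (-Real.exp (-x^2)) x := by
  have h : HasDerivAt (fun u => ∫ t in (0:ℝ)..u, Real.exp (-t^2)) (Real.exp (-x^2)) x :=
    intervalIntegral.integral_hasDerivAt_right (gauss_ii 0 x)
      (gauss_integrable.1.stronglyMeasurableAtFilter) (by fun_prop)
  have : HasDerivAt (fun u => Ig 0 - ∫ t in (0:ℝ)..u, Real.exp (-t^2)) (-Real.exp (-x^2)) x :=
    (h.const_sub _)
  exact this.congr_of_eventuallyEq (Eventually.of_forall fun u => (Ig_eq u))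

lemma sqrt_pi_pos : 0 < Real.sqrt Real.pi := Real.sqrt_pos.2 Real.pi_pos

lemma int_neg (t : ℝ) : (∫ s in (0:ℝ)..(-t), Real.exp (-s^2)) = - ∫ s in (0:ℝ)..t, Real.exp (-s^2) := by
  have h := intervalIntegral.integral_comp_neg (a := (0:ℝ)) (b := t) (fun s => Real.exp (-s^2))
  simp only [neg_zero, neg_neg] at h
  have h2 : (∫ x in (0:ℝ)..t, Real.exp (-(-x)^2)) = ∫ x in (0:ℝ)..t, Real.exp (-x^2) := by
    congr 1; funext x; ring_nf
  rw [h2] at h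
  rw [intervalIntegral.integral_symm, h]

lemma erf_Ig (t : ℝ) : 1 + erf t = (2 / Real.sqrt Real.pi) * Ig (-t) := by
  rw [Ig_eq, int_neg, Ig_zero, erf]
  field_simp
  ring

lemma one_add_erf_pos (t : ℝ) : 0 < 1 + erf t := by
  rw [erf_Ig]
  have := Ig_pos (-t)
  positivity

lemma fErf'_eq (t : ℝ) : fErf' t = Real.exp (-t^2) / Ig (-t) := by
  rw [fErf', erf_Ig]
  have h1 := Ig_pos (-t)
  have h2 := sqrt_pi_pos
  field_simp

lemma fErf'_pos (t : ℝ) : 0 < fErf' t := by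
  rw [fErf'_eq]; have := Ig_pos (-t); positivity

lemma hasDerivAt_erf (t : ℝ) : HasDerivAt erf (2 / Real.sqrt Real.pi * Real.exp (-t^2)) t := by
  have h : HasDerivAt (fun u => ∫ s in (0:ℝ)..u, Real.exp (-s^2)) (Real.exp (-t^2)) t :=
    intervalIntegral.integral_hasDerivAt_right (gauss_ii 0 t)
      ((Real.continuous_exp.comp (by continuity)).aestronglyMeasurable.stronglyMeasurableAtFilter)
      (by fun_prop)
  exact h.const_mul _

lemma hasDerivAt_fErf (t : ℝ) : HasDerivAt fErf (fErf' t) t := by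
  have h := ((hasDerivAt_erf t).const_add 1).log (by have := one_add_erf_pos t; positivity)
  exact h

lemma hasDerivAt_IgNeg (t : ℝ) : HasDerivAt (fun u => Ig (-u)) (Real.exp (-t^2)) t := by
  have h := (hasDerivAt_Ig (-t)).comp t (hasDerivAt_neg t)
  exact h.congr_deriv (by simp)

lemma hasDerivAt_fErf' (t : ℝ) :
    HasDerivAt fErf' (-2*t*fErf' t - (fErf' t)^2) t := by
  have hnum : HasDerivAt (fun u : ℝ => Real.exp (-u^2)) (-2*t*Real.exp (-t^2)) t := by
    have h1 : HasDerivAt (fun u : ℝ => -u^2) (-2*t) t := by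
      simpa using ((hasDerivAt_pow 2 t).fun_neg)
    simpa [mul_comm] using h1.exp
  have h := hnum.fun_div (hasDerivAt_IgNeg t) (Ig_pos (-t)).ne'
  have he : fErf' = fun u => Real.exp (-u^2) / Ig (-u) := funext fErf'_eq
  rw [he]
  refine h.congr_deriv ?_
  have h0 := (Ig_pos (-t)).ne'
  field_simp

lemma Ig_le_exp {x : ℝ} (hx : 1 ≤ x) : Ig x ≤ Real.exp (-x) := by
  have h1 : Ig x ≤ ∫ s in Ioi x, Real.exp (-s) := by
    apply setIntegral_mono_on gauss_integrable.integrableOn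
      ((exp_neg_integrableOn_Ioi x one_pos).congr_fun (by intro s _; simp) measurableSet_Ioi)
      measurableSet_Ioi
    intro s hs
    apply Real.exp_le_exp.2
    have : 1 ≤ s := hx.trans (le_of_lt hs)
    nlinarith
  calc Ig x ≤ _ := h1
    _ = Real.exp (-x) := by
        have := integral_exp_neg_Ioi x
        simpa using this

lemma Ig_tendsto : Tendsto Ig atTop (nhds 0) := by
  apply tendsto_of_tendsto_of_tendsto_of_le_of_le' tendsto_const_nhds
    Real.tendsto_exp_neg_atTop_nhds_zero
  · exact Eventually.of_forall fun x => (Ig_pos x).le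
  · filter_upwards [eventually_ge_atTop (1:ℝ)] with x hx using Ig_le_exp hx

noncomputable def phi (x : ℝ) : ℝ := (Real.sqrt (x^2+2) - x)/2
noncomputable def uf (x : ℝ) : ℝ := Ig x - phi x * Real.exp (-x^2)

lemma sq2_pos (x : ℝ) : 0 < x^2 + 2 := by positivity
lemma sqrt_sq2_pos (x : ℝ) : 0 < Real.sqrt (x^2+2) := Real.sqrt_pos.2 (sq2_pos x)
lemma sqrt_sq2_sq (x : ℝ) : (Real.sqrt (x^2+2))^2 = x^2+2 := Real.sq_sqrt (sq2_pos x).le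

lemma phi_pos (x : ℝ) : 0 < phi x := by
  have hs := sqrt_sq2_pos x
  have h2 := sqrt_sq2_sq x
  rcases le_or_gt x 0 with h | h
  · rw [phi]; nlinarith
  · rw [phi]
    have : x < Real.sqrt (x^2+2) := by nlinarith [Real.sqrt_nonneg (x^2+2)]
    linarith

lemma hasDerivAt_phi (x : ℝ) :
    HasDerivAt phi ((x / Real.sqrt (x^2+2) - 1)/2) x := by
  have h1 : HasDerivAt (fun y : ℝ => y^2+2) (2*x) x := by
    simpa using (hasDerivAt_pow 2 x).add_const 2
  have h2 := (h1.sqrt (sq2_pos x).ne')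
  have h3 : (2*x) / (2 * Real.sqrt (x^2+2)) = x / Real.sqrt (x^2+2) := by
    rw [mul_div_mul_left _ _ (two_ne_zero)]
  rw [h3] at h2
  exact ((h2.sub (hasDerivAt_id x)).div_const 2)

lemma hasDerivAt_uf (x : ℝ) :
    HasDerivAt uf (Real.exp (-x^2) * (-1 - ((x / Real.sqrt (x^2+2) - 1)/2) + 2*x*(phi x))) x := by
  have hexp : HasDerivAt (fun u : ℝ => Real.exp (-u^2)) (-2*x*Real.exp (-x^2)) x := by
    have h1 : HasDerivAt (fun u : ℝ => -u^2) (-2*x) x := by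
      simpa using ((hasDerivAt_pow 2 x).fun_neg)
    simpa [mul_comm] using h1.exp
  have h := (hasDerivAt_Ig x).fun_sub (((hasDerivAt_phi x).fun_mul hexp))
  refine h.congr_deriv ?_
  ring

lemma uf_deriv_neg (x : ℝ) :
    Real.exp (-x^2) * (-1 - ((x / Real.sqrt (x^2+2) - 1)/2) + 2*x*(phi x)) < 0 := by
  set s := Real.sqrt (x^2+2) with hs_def
  have hs : 0 < s := sqrt_sq2_pos x
  have hs2 : s^2 = x^2+2 := sqrt_sq2_sq x
  have key : 2*x^3 + 3*x < s*(2*x^2+1) := by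
    have ha2 : (s*(2*x^2+1))^2 = (2*x^3+3*x)^2 + 2 := by nlinarith [hs2]
    nlinarith [ha2, mul_pos hs (by positivity : (0:ℝ) < 2*x^2+1)]
  have hexp : 0 < Real.exp (-x^2) := Real.exp_pos _
  have hneg : (-1 - ((x / s - 1)/2) + 2*x*(phi x)) < 0 := by
    rw [phi, ← hs_def]
    set q := x / s with hqd
    have hq : q * s = x := div_mul_cancel₀ x hs.ne'
    have e : (-1 - ((q - 1)/2) + 2*x*((s - x)/2)) * (2*s) = 2*x^3+3*x - s*(2*x^2+1) := by
      linear_combination (-1 : ℝ) * hq + (2*x) * hs2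
    nlinarith [e, key, hs]
  exact mul_neg_of_pos_of_neg hexp hneg

lemma phi_le_one {x : ℝ} (hx : 0 ≤ x) : phi x ≤ 1 := by
  rw [phi]
  have h : Real.sqrt (x^2+2) ≤ x + 2 := by
    rw [show x^2+2 = ((x+2)^2) - (4*x + 2) by ring]
    calc Real.sqrt ((x+2)^2 - (4*x+2)) ≤ Real.sqrt ((x+2)^2) := by
          apply Real.sqrt_le_sqrt; nlinarith
      _ = x + 2 := Real.sqrt_sq (by linarith)
  linarith

lemma uf_tendsto : Tendsto uf atTop (nhds 0) := by
  have h2 : Tendsto (fun x => phi x * Real.exp (-x^2)) atTop (nhds 0) := by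
    apply tendsto_of_tendsto_of_tendsto_of_le_of_le' tendsto_const_nhds
      Real.tendsto_exp_neg_atTop_nhds_zero
    · exact Eventually.of_forall fun x => mul_nonneg (phi_pos x).le (Real.exp_pos _).le
    · filter_upwards [eventually_ge_atTop (1:ℝ)] with x hx
      calc phi x * Real.exp (-x^2) ≤ 1 * Real.exp (-x^2) := by
            apply mul_le_mul_of_nonneg_right (phi_le_one (by linarith)) (Real.exp_pos _).le
        _ = Real.exp (-x^2) := one_mul _
        _ ≤ Real.exp (-x) := by apply Real.exp_le_exp.2; nlinarith
  have := Ig_tendsto.sub h2; simp only [sub_zero] at this; exact this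

lemma uf_anti : StrictAnti uf := by
  apply strictAnti_of_deriv_neg
  intro x
  rw [(hasDerivAt_uf x).deriv]
  exact uf_deriv_neg x

lemma uf_pos (x : ℝ) : 0 < uf x := by
  have h1 : uf (x+1) < uf x := uf_anti (by linarith)
  have h2 : 0 ≤ uf (x+1) := by
    apply le_of_tendsto uf_tendsto
    filter_upwards [eventually_ge_atTop (x+1)] with y hy
    exact (uf_anti.antitone hy)
  linarith

noncomputable def vf (x : ℝ) : ℝ := Real.exp (-x^2)/(2*x) - Ig x

lemma hasDerivAt_vf {x : ℝ} (hx : 0 < x) :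
    HasDerivAt vf (-Real.exp (-x^2)/(2*x^2)) x := by
  have hexp : HasDerivAt (fun u : ℝ => Real.exp (-u^2)) (-2*x*Real.exp (-x^2)) x := by
    have h1 : HasDerivAt (fun u : ℝ => -u^2) (-2*x) x := by
      simpa using ((hasDerivAt_pow 2 x).fun_neg)
    simpa [mul_comm] using h1.exp
  have hden : HasDerivAt (fun u : ℝ => 2*u) 2 x := by
    simpa using (hasDerivAt_id x).const_mul 2
  have h := (hexp.fun_div hden (by positivity)).fun_sub (hasDerivAt_Ig x)
  refine h.congr_deriv ?_
  field_simp
  ring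

lemma vf_tendsto : Tendsto vf atTop (nhds 0) := by
  have h2 : Tendsto (fun x => Real.exp (-x^2)/(2*x)) atTop (nhds 0) := by
    apply tendsto_of_tendsto_of_tendsto_of_le_of_le' tendsto_const_nhds
      Real.tendsto_exp_neg_atTop_nhds_zero
    · filter_upwards [eventually_gt_atTop (0:ℝ)] with x hx; positivity
    · filter_upwards [eventually_ge_atTop (1:ℝ)] with x hx
      calc Real.exp (-x^2)/(2*x) ≤ Real.exp (-x^2)/2 := by
            apply div_le_div_of_nonneg_left (Real.exp_pos _).le two_pos ?_ |>.trans ?_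
            · nlinarith
            · rfl
        _ ≤ Real.exp (-x) := by
            have := Real.exp_le_exp.2 (show -x^2 ≤ -x by nlinarith)
            linarith [Real.exp_pos (-x^2)]
  have := h2.sub Ig_tendsto; simp only [sub_zero] at this; exact this

lemma vf_pos {x : ℝ} (hx : 0 < x) : 0 < vf x := by
  have hanti : StrictAntiOn vf (Ioi (0:ℝ)) := by
    apply strictAntiOn_of_deriv_neg (convex_Ioi 0)
    · intro y hy
      exact (hasDerivAt_vf hy).continuousAt.continuousWithinAt
    · intro y hy
      rw [interior_Ioi] at hy
      have hy' : (0:ℝ) < y := hy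
      rw [(hasDerivAt_vf hy').deriv, neg_div]
      have : 0 < Real.exp (-y^2)/(2*y^2) := by positivity
      linarith
  have h1 : vf (x+1) < vf x := hanti (mem_Ioi.2 hx) (mem_Ioi.2 (by linarith)) (by linarith)
  have h2 : 0 ≤ vf (x+1) := by
    apply le_of_tendsto vf_tendsto
    filter_upwards [eventually_ge_atTop (x+1)] with y hy
    rcases eq_or_lt_of_le hy with h | h
    · exact le_of_eq (by rw [h])
    · exact (hanti (mem_Ioi.2 (by linarith)) (mem_Ioi.2 (by linarith)) h).le
  linarith

lemma fErf'_add_pos (t : ℝ) : 0 < fErf' t + 2*t := by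
  rcases le_or_gt 0 t with h | h
  · have := fErf'_pos t; linarith
  · have hx : 0 < -t := by linarith
    have hv := vf_pos hx
    rw [vf] at hv
    rw [fErf'_eq]
    have hI := Ig_pos (-t)
    rw [div_add' _ _ _ hI.ne', lt_div_iff₀ hI]
    have h2 : Ig (-t) * (2*(-t)) < Real.exp (-(-t)^2) := by
      have := mul_lt_mul_of_pos_right (show Ig (-t) < Real.exp (-(-t)^2)/(2*(-t)) by linarith) (by linarith : (0:ℝ) < 2*(-t))
      rwa [div_mul_cancel₀ _ (by linarith : (2*(-t)) ≠ 0)] at this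
    have he : Real.exp (-(-t)^2) = Real.exp (-t^2) := by ring_nf
    rw [he] at h2
    nlinarith

lemma fErf'_lt (t : ℝ) : fErf' t < Real.sqrt (t^2+2) - t := by
  have hu := uf_pos (-t)
  rw [uf] at hu
  have hI := Ig_pos (-t)
  have hphi := phi_pos (-t)
  have hexp := Real.exp_pos (-(-t)^2)
  have h1 : phi (-t) * Real.exp (-(-t)^2) < Ig (-t) := by linarith
  rw [fErf'_eq]
  have he : Real.exp (-(-t)^2) = Real.exp (-t^2) := by ring_nf
  rw [he] at h1 hexp
  rw [div_lt_iff₀ hI]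
  have hs := sqrt_sq2_pos t
  have hs2 := sqrt_sq2_sq t
  have hsq : ((-t)^2 + 2) = t^2+2 := by ring
  have hphi' : phi (-t) = (Real.sqrt (t^2+2) + t)/2 := by rw [phi, hsq]; ring
  rw [hphi'] at h1
  -- (√(t²+2) - t) * Ig(-t) > (√(t²+2)-t) * (√(t²+2)+t)/2 * exp = exp
  have hpos : 0 < Real.sqrt (t^2+2) - t := by nlinarith
  calc Real.exp (-t^2) = (Real.sqrt (t^2+2) - t) * ((Real.sqrt (t^2+2) + t)/2 * Real.exp (-t^2)) := by
        rw [← mul_assoc]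
        have : (Real.sqrt (t^2+2) - t) * ((Real.sqrt (t^2+2) + t)/2) = 1 := by nlinarith
        rw [this, one_mul]
    _ < (Real.sqrt (t^2+2) - t) * Ig (-t) := by
        apply mul_lt_mul_of_pos_left _ hpos
        linarith

lemma deriv_fErf'_neg (t : ℝ) : deriv fErf' t < 0 := by
  rw [(hasDerivAt_fErf' t).deriv]
  have h1 := fErf'_pos t
  have h2 := fErf'_add_pos t
  nlinarith

lemma fErf'_strictAnti : StrictAnti fErf' := strictAnti_of_deriv_neg deriv_fErf'_neg

lemma one_add_half_f'' (t : ℝ) : 0 < 1 + (-2*t*fErf' t - (fErf' t)^2)/2 := by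
  have h1 := fErf'_lt t
  have h2 := fErf'_pos t
  have hs := sqrt_sq2_pos t
  have hs2 := sqrt_sq2_sq t
  have hb : 0 < Real.sqrt (t^2+2) + (fErf' t + t) := by nlinarith
  have ha : 0 < Real.sqrt (t^2+2) - (fErf' t + t) := by linarith
  nlinarith [mul_pos ha hb]

lemma erf_zero : erf 0 = 0 := by simp [erf]

lemma fErf'_zero : fErf' 0 = 2 / Real.sqrt Real.pi := by
  simp [fErf', erf_zero]

lemma hasDerivAt_E {ν : ℝ} (hν : 0 < ν) (g c : ℝ) :
    HasDerivAt (Eenergy ν g)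
      ((-(ν * ((fErf' (c / Real.sqrt (2*ν))) * (1/Real.sqrt (2*ν))
            + (1/4) * (2 * fErf' (c / Real.sqrt (2*ν)) *
              ((-2*(c / Real.sqrt (2*ν))*fErf' (c / Real.sqrt (2*ν)) - (fErf' (c / Real.sqrt (2*ν)))^2) * (1/Real.sqrt (2*ν))))))
        + g * (Real.sqrt (ν / 2) * ((-2*(c / Real.sqrt (2*ν))*fErf' (c / Real.sqrt (2*ν)) - (fErf' (c / Real.sqrt (2*ν)))^2) * (1/Real.sqrt (2*ν)))
            + Real.sqrt (2 * ν) * (1/Real.sqrt (2*ν))))) c := by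
  have hr : (0:ℝ) < Real.sqrt (2*ν) := Real.sqrt_pos.2 (by linarith)
  set r := Real.sqrt (2*ν)
  have hdiv : HasDerivAt (fun c : ℝ => c / r) (1/r) c := by
    simpa using (hasDerivAt_id c).div_const r
  have hF : HasDerivAt (fun c : ℝ => fErf (c / r)) (fErf' (c/r) * (1/r)) c :=
    by have := (hasDerivAt_fErf (c/r)).comp c hdiv; exact this
  have hG : HasDerivAt (fun c : ℝ => fErf' (c / r))
      ((-2*(c/r)*fErf' (c/r) - (fErf' (c/r))^2) * (1/r)) c :=
    by have := (hasDerivAt_fErf' (c/r)).comp c hdiv; exact this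
  have h1 : HasDerivAt (fun c : ℝ => fErf (c/r) + (1/4) * (fErf' (c/r))^2)
      (fErf' (c/r) * (1/r) + (1/4) * (2 * fErf' (c/r) * ((-2*(c/r)*fErf' (c/r) - (fErf' (c/r))^2) * (1/r)))) c := by
    have hsq : HasDerivAt (fun c : ℝ => (fErf' (c/r))^2)
        (2 * fErf' (c/r) * ((-2*(c/r)*fErf' (c/r) - (fErf' (c/r))^2) * (1/r))) c := by
      have := hG.fun_pow 2
      simpa [mul_comm, mul_assoc, mul_left_comm] using this
    exact hF.add (hsq.const_mul (1/4))
  have h2 : HasDerivAt (fun c : ℝ => Real.sqrt (ν/2) * fErf' (c/r) + r * (c/r))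
      (Real.sqrt (ν/2) * ((-2*(c/r)*fErf' (c/r) - (fErf' (c/r))^2) * (1/r)) + r * (1/r)) c :=
    (hG.const_mul _).add (hdiv.const_mul r)
  exact ((h1.const_mul ν).neg.const_add _).add (h2.const_mul g)

lemma sqrt_nu_half {ν : ℝ} (hν : 0 < ν) : Real.sqrt (ν/2) = Real.sqrt (2*ν) / 2 := by
  rw [show ν/2 = (2*ν)/4 by ring, Real.sqrt_div (by linarith)]
  norm_num

lemma deriv_E {ν : ℝ} (hν : 0 < ν) (c : ℝ) :
    deriv (Eenergy ν (Real.sqrt (2*ν/Real.pi))) c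
      = (Real.sqrt (2*ν)/2) * (2/Real.sqrt Real.pi - fErf' (c / Real.sqrt (2*ν)))
        * (1 + (-2*(c / Real.sqrt (2*ν))*fErf' (c / Real.sqrt (2*ν)) - (fErf' (c / Real.sqrt (2*ν)))^2)/2) := by
  have hr : (0:ℝ) < Real.sqrt (2*ν) := Real.sqrt_pos.2 (by linarith)
  have hp : (0:ℝ) < Real.sqrt Real.pi := sqrt_pi_pos
  have hr2 : (Real.sqrt (2*ν))^2 = 2*ν := Real.sq_sqrt (by linarith)
  have hg : Real.sqrt (2*ν/Real.pi) = Real.sqrt (2*ν) / Real.sqrt Real.pi := by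
    exact Real.sqrt_div (by linarith) _
  have hnu2 : Real.sqrt (ν/2) = Real.sqrt (2*ν) / 2 := sqrt_nu_half hν
  rw [(hasDerivAt_E hν _ c).deriv, hg, hnu2]
  set r := Real.sqrt (2*ν)
  set p := Real.sqrt Real.pi
  set f1 := fErf' (c / r)
  have hν' : ν = r^2/2 := by rw [hr2]; ring
  rw [hν']
  field_simp
  ring

/-- for `g = g_c = √(2ν/π)`, one has `f'(0) = √(2/ν)·g_c`, and `c = 0` is
the unique critical point of the energy `E`. -/
theorem stmt_19 (ν : ℝ) (hν : 0 < ν) :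
    fErf' 0 = Real.sqrt (2 / ν) * Real.sqrt (2 * ν / Real.pi)
    ∧ deriv (Eenergy ν (Real.sqrt (2 * ν / Real.pi))) 0 = 0
    ∧ (∀ c : ℝ, deriv (Eenergy ν (Real.sqrt (2 * ν / Real.pi))) c = 0 → c = 0) := by
  have hp : (0:ℝ) < Real.sqrt Real.pi := sqrt_pi_pos
  have hr : (0:ℝ) < Real.sqrt (2*ν) := Real.sqrt_pos.2 (by linarith)
  have h01 : fErf' 0 = Real.sqrt (2 / ν) * Real.sqrt (2 * ν / Real.pi) := by
    rw [fErf'_zero, ← Real.sqrt_mul (by positivity : (0:ℝ) ≤ 2/ν),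
      show 2/ν * (2*ν/Real.pi) = 4/Real.pi by field_simp; ring,
      Real.sqrt_div (by norm_num : (0:ℝ) ≤ 4),
      show (4:ℝ) = 2^2 by norm_num, Real.sqrt_sq (by norm_num : (0:ℝ) ≤ 2)]
  refine ⟨h01, ?_, ?_⟩
  · rw [deriv_E hν 0]
    rw [zero_div, fErf'_zero]
    ring
  · intro c hc
    rw [deriv_E hν c] at hc
    set t := c / Real.sqrt (2*ν) with ht
    have h3 := one_add_half_f'' t
    have h2 : 2/Real.sqrt Real.pi - fErf' t = 0 := by
      rcases mul_eq_zero.1 hc with h | h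
      · rcases mul_eq_zero.1 h with h' | h'
        · exact absurd h' (by positivity)
        · exact h'
      · exact absurd h (by linarith)
    have h4 : fErf' t = fErf' 0 := by rw [fErf'_zero]; linarith
    have h5 : t = 0 := fErf'_strictAnti.injective h4
    rw [ht] at h5
    exact (div_eq_zero_iff.1 h5).resolve_right hr.ne'
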